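/- Define K_{m,p}(π) = inf over triangles T of unit area of ‖π − I_T π‖_{L^p(T)}, for π ∈ H_m. Then for any invertible linear map φ, K_{m,p}(π∘φ) = |det φ|^{m/2} K_{m,p}(π). -/

import Mathlib

open MeasureTheory

noncomputable section

/-- evaluation of the binary form of degree `m` with coefficients `a` -/
def formEval (m : ℕ) (a : Fin (m + 1) → ℝ) (z : ℝ × ℝ) : ℝ :=
  ∑ i : Fin (m + 1), a i * z.1 ^ (i : ℕ) * z.2 ^ (m - (i : ℕ))

/-- `π` is a binary homogeneous form of degree `m` (an element of H_m) -/
def IsForm (m : ℕ) (π : ℝ × ℝ → ℝ) : Prop :=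
  ∃ a : Fin (m + 1) → ℝ, ∀ z, π z = formEval m a z

/-- `p` is (the evaluation of) a polynomial of total degree at most `n` -/
def IsPolyDeg (n : ℕ) (p : ℝ × ℝ → ℝ) : Prop :=
  ∃ q : MvPolynomial (Fin 2) ℝ, q.totalDegree ≤ n ∧
    ∀ z : ℝ × ℝ, p z = MvPolynomial.eval ![z.1, z.2] q

/-- the Lagrange interpolation nodes of degree `m - 1` on the triangle with vertices
`T 0, T 1, T 2`: the points whose barycentric coordinates lie in {0, 1/(m−1), …, 1} -/
def interpNodes (m : ℕ) (T : Fin 3 → ℝ × ℝ) : Set (ℝ × ℝ) :=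
  { z | ∃ k : Fin 3 → ℕ, (∑ i, k i) = m - 1 ∧
      z = ∑ i, ((k i : ℝ) / ((m : ℝ) - 1)) • T i }

/-- `p` is the degree `m - 1` Lagrange interpolant of `v` on the triangle `T` -/
def IsInterpolant (m : ℕ) (T : Fin 3 → ℝ × ℝ) (v p : ℝ × ℝ → ℝ) : Prop :=
  IsPolyDeg (m - 1) p ∧ ∀ z ∈ interpNodes m T, p z = v z

/-- the Lagrange interpolation operator `I_{m,T}` of degree `m - 1` on the triangle `T` -/
def interp (m : ℕ) (T : Fin 3 → ℝ × ℝ) (v : ℝ × ℝ → ℝ) : ℝ × ℝ → ℝ := by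
  classical exact if h : ∃ p, IsInterpolant m T v p then h.choose else 0

/-- the (closed) triangle with vertices `T 0, T 1, T 2` -/
def triangleSet (T : Fin 3 → ℝ × ℝ) : Set (ℝ × ℝ) := convexHull ℝ (Set.range T)

/-- the area of the triangle with vertices `T 0, T 1, T 2` -/
def triArea (T : Fin 3 → ℝ × ℝ) : ℝ :=
  |((T 1).1 - (T 0).1) * ((T 2).2 - (T 0).2) -
    ((T 2).1 - (T 0).1) * ((T 1).2 - (T 0).2)| / 2

/-- the interpolation error `‖v − I_{m,T} v‖_{L^p(T)}` -/
def lpErr (m : ℕ) (p : ℝ) (T : Fin 3 → ℝ × ℝ) (v : ℝ × ℝ → ℝ) : ℝ :=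
  (∫ z in triangleSet T, |v z - interp m T v z| ^ p) ^ (1 / p)

/-- the interpolation error `‖v − I_{m,T} v‖_{L^∞(T)}` -/
def supErr (m : ℕ) (T : Fin 3 → ℝ × ℝ) (v : ℝ × ℝ → ℝ) : ℝ :=
  sSup ((fun z => |v z - interp m T v z|) '' triangleSet T)

/-- the shape function `K_{m,p}(π) = inf_{|T|=1} ‖π − I_{m,T} π‖_{L^p(T)}` -/
def Kfun (m : ℕ) (p : ℝ) (π : ℝ × ℝ → ℝ) : ℝ :=
  sInf { e | ∃ T : Fin 3 → ℝ × ℝ, triArea T = 1 ∧ e = lpErr m p T π }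


namespace Stmt12Aux

open Polynomial Pointwise

/-- total-degree-style bound for nested polynomials -/
def DegLe (Q : Polynomial (Polynomial ℝ)) (d : ℕ) : Prop :=
  ∀ k, Q.coeff k = 0 ∨ (Q.coeff k).natDegree + k ≤ d

lemma eval_C_natDegree_le {Q : Polynomial (Polynomial ℝ)} {d : ℕ} (h : DegLe Q d) (a : ℝ) :
    (Q.eval (Polynomial.C a)).natDegree ≤ d := by
  rw [Polynomial.eval_eq_sum_range]
  refine Polynomial.natDegree_sum_le_of_forall_le _ _ fun k _ => ?_
  refine le_trans (Polynomial.natDegree_mul_le) ?_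
  have h2 : ((Polynomial.C a : Polynomial ℝ) ^ k).natDegree = 0 := by
    rw [← Polynomial.C_pow, Polynomial.natDegree_C]
  rw [h2, add_zero]
  rcases h k with h0 | hle
  · rw [h0]; simp
  · omega

lemma grid_vanish : ∀ (d : ℕ) (Q : Polynomial (Polynomial ℝ)) (x y : ℕ → ℝ),
    (∀ i j, i ≤ d → j ≤ d → i ≠ j → x i ≠ x j) →
    (∀ i j, i ≤ d → j ≤ d → i ≠ j → y i ≠ y j) →
    DegLe Q d →
    (∀ i j, i + j ≤ d → (Q.eval (Polynomial.C (x i))).eval (y j) = 0) → Q = 0 := by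
  intro d
  induction d with
  | zero =>
    intro Q x y _ _ hdeg hvan
    have hQdeg : Q.natDegree ≤ 0 := by
      refine Polynomial.natDegree_le_iff_coeff_eq_zero.mpr fun N hN => ?_
      rcases hdeg N with h0 | hle
      · exact h0
      · omega
    have hQ : Q = Polynomial.C (Q.coeff 0) := Polynomial.eq_C_of_natDegree_le_zero hQdeg
    rcases hdeg 0 with h0 | hle
    · rw [hQ, h0, map_zero]
    · have hcdeg : (Q.coeff 0).natDegree ≤ 0 := by omega
      have hc : Q.coeff 0 = Polynomial.C ((Q.coeff 0).coeff 0) :=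
        Polynomial.eq_C_of_natDegree_le_zero hcdeg
      have h := hvan 0 0 (by omega)
      rw [hQ, Polynomial.eval_C] at h
      rw [hc, Polynomial.eval_C] at h
      rw [hQ, hc, h]
      simp
  | succ d IH =>
    intro Q x y hx hy hdeg hvan
    have hu0 : Q.eval (Polynomial.C (x 0)) = 0 := by
      refine Polynomial.eq_zero_of_natDegree_lt_card_of_eval_eq_zero _
        (f := fun j : Fin (d + 2) => y j) ?_ ?_ ?_
      · intro a b hab
        by_contra hne
        exact hy a b a.is_le b.is_le (fun hc => hne (Fin.ext hc)) hab
      · intro j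
        exact hvan 0 j (by omega)
      · rw [Fintype.card_fin]
        have := eval_C_natDegree_le hdeg (x 0)
        omega
    obtain ⟨R, hR⟩ : (X - Polynomial.C (Polynomial.C (x 0))) ∣ Q :=
      Polynomial.dvd_iff_isRoot.mpr hu0
    have hcoeff : ∀ k, R.coeff k = Q.coeff (k + 1) + Polynomial.C (x 0) * R.coeff (k + 1) := by
      intro k
      have h : Q.coeff (k + 1) = ((X - Polynomial.C (Polynomial.C (x 0))) * R).coeff (k + 1) := by
        rw [← hR]
      rw [sub_mul, Polynomial.coeff_sub, Polynomial.coeff_X_mul, Polynomial.coeff_C_mul] at h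
      rw [h]; ring
    have hdegR : DegLe R d := by
      have key : ∀ n k, R.natDegree + 1 ≤ k + n →
          (R.coeff k = 0 ∨ (R.coeff k).natDegree + k ≤ d) := by
        intro n
        induction n with
        | zero =>
          intro k hk
          exact Or.inl (Polynomial.coeff_eq_zero_of_natDegree_lt (by omega))
        | succ n ih =>
          intro k hk
          rcases le_or_gt (R.natDegree + 1) k with hbig | hsmall
          · exact Or.inl (Polynomial.coeff_eq_zero_of_natDegree_lt (by omega))
          · have IH' := ih (k + 1) (by omega)
            have hQ := hdeg (k + 1)
            have hmul : (Polynomial.C (x 0) * R.coeff (k + 1)).natDegree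
                ≤ (R.coeff (k + 1)).natDegree := by
              refine le_trans (Polynomial.natDegree_mul_le) ?_
              rw [Polynomial.natDegree_C, zero_add]
            rcases hQ with hQ0 | hQle
            · rcases IH' with hR0 | hRle
              · left; rw [hcoeff k, hQ0, hR0, mul_zero, add_zero]
              · right
                have hkd : k + 1 ≤ d := by omega
                rw [hcoeff k, hQ0, zero_add]
                have := hmul
                omega
            · right
              have hkd : k ≤ d := by omega
              rw [hcoeff k]
              have hQb : (Q.coeff (k + 1)).natDegree ≤ d - k := by omega
              have hRb : (Polynomial.C (x 0) * R.coeff (k + 1)).natDegree ≤ d - k := by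
                rcases IH' with hR0 | hRle
                · rw [hR0, mul_zero, Polynomial.natDegree_zero]; omega
                · omega
              have := Polynomial.natDegree_add_le_of_degree_le hQb hRb
              omega
      intro k
      exact key (R.natDegree + 1) k (by omega)
    have hvanR : ∀ i j, i + j ≤ d → (R.eval (Polynomial.C (x (i + 1)))).eval (y j) = 0 := by
      intro i j hij
      have h := hvan (i + 1) j (by omega)
      rw [hR, Polynomial.eval_mul, Polynomial.eval_sub, Polynomial.eval_X, Polynomial.eval_C,
        Polynomial.eval_mul, Polynomial.eval_sub, Polynomial.eval_C, Polynomial.eval_C] at h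
      have hne : x (i + 1) - x 0 ≠ 0 :=
        sub_ne_zero.mpr (hx (i + 1) 0 (by omega) (by omega) (by omega))
      exact (mul_eq_zero.mp h).resolve_left hne
    have hR0 : R = 0 :=
      IH R (fun n => x (n + 1)) y
        (fun i j hi hj hne => hx (i + 1) (j + 1) (by omega) (by omega) (by omega))
        (fun i j hi hj hne => hy i j (by omega) (by omega) hne) hdegR hvanR
    rw [hR, hR0, mul_zero]


def toNested : MvPolynomial (Fin 2) ℝ →+* Polynomial (Polynomial ℝ) :=
  MvPolynomial.eval₂Hom (Polynomial.C.comp Polynomial.C)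
    ![Polynomial.X, Polynomial.C Polynomial.X]

lemma toNested_evalEval (q : MvPolynomial (Fin 2) ℝ) (a b : ℝ) :
    ((toNested q).eval (Polynomial.C a)).eval b = MvPolynomial.eval ![a, b] q := by
  induction q using MvPolynomial.induction_on with
  | C r => simp [toNested]
  | add p q hp hq => simp [map_add, hp, hq]
  | mul_X p i hp =>
    rw [map_mul, Polynomial.eval_mul, Polynomial.eval_mul, map_mul, hp]
    congr 1
    fin_cases i <;> simp [toNested]

lemma degsum (d : Fin 2 →₀ ℕ) : (d.sum fun _ e => e) = d 0 + d 1 := by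
  rw [Finsupp.sum_fintype _ _ (fun _ => rfl), Fin.sum_univ_two]

lemma toNested_monomial (dd : Fin 2 →₀ ℕ) (cc : ℝ) :
    toNested (MvPolynomial.monomial dd cc)
      = Polynomial.C (Polynomial.C cc * Polynomial.X ^ (dd 1)) * Polynomial.X ^ (dd 0) := by
  rw [toNested, MvPolynomial.eval₂Hom_monomial]
  rw [Finsupp.prod_pow]
  rw [Fin.prod_univ_two]
  simp only [Matrix.cons_val_zero, Matrix.cons_val_one, Matrix.head_cons, RingHom.coe_comp,
    Function.comp_apply]
  simp only [Polynomial.C_mul, Polynomial.C_pow]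
  ring

lemma toNested_degLe (q : MvPolynomial (Fin 2) ℝ) : DegLe (toNested q) q.totalDegree := by
  have hrepr : toNested q = ∑ dd ∈ q.support,
      Polynomial.C (Polynomial.C (MvPolynomial.coeff dd q) * Polynomial.X ^ (dd 1))
        * Polynomial.X ^ (dd 0) := by
    conv_lhs => rw [← MvPolynomial.support_sum_monomial_coeff q]
    rw [map_sum]
    exact Finset.sum_congr rfl fun dd _ => toNested_monomial dd _
  have hsupp : ∀ dd ∈ q.support, dd 0 + dd 1 ≤ q.totalDegree := by
    intro dd hdd
    have := MvPolynomial.le_totalDegree hdd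
    rwa [degsum] at this
  intro k
  have hcoeff : (toNested q).coeff k = ∑ dd ∈ q.support,
      if k = dd 0 then Polynomial.C (MvPolynomial.coeff dd q) * Polynomial.X ^ (dd 1) else 0 := by
    rw [hrepr, Polynomial.finset_sum_coeff]
    exact Finset.sum_congr rfl fun dd _ => Polynomial.coeff_C_mul_X_pow _ _ _
  by_cases hk : k ≤ q.totalDegree
  · right
    have hnd : ((toNested q).coeff k).natDegree ≤ q.totalDegree - k := by
      rw [hcoeff]
      refine Polynomial.natDegree_sum_le_of_forall_le _ _ fun dd hdd => ?_
      split_ifs with h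
      · refine le_trans Polynomial.natDegree_mul_le ?_
        rw [Polynomial.natDegree_C, zero_add, Polynomial.natDegree_X_pow]
        have := hsupp dd hdd
        omega
      · simp
    omega
  · left
    rw [hcoeff]
    refine Finset.sum_eq_zero fun dd hdd => ?_
    have := hsupp dd hdd
    rw [if_neg (by omega)]


lemma mv_vanish (d : ℕ) (q : MvPolynomial (Fin 2) ℝ) (hq : q.totalDegree ≤ d)
    (x y : ℕ → ℝ)
    (hx : ∀ i j, i ≤ d → j ≤ d → i ≠ j → x i ≠ x j)
    (hy : ∀ i j, i ≤ d → j ≤ d → i ≠ j → y i ≠ y j)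
    (hvan : ∀ i j, i + j ≤ d → MvPolynomial.eval ![x i, y j] q = 0) :
    ∀ a b : ℝ, MvPolynomial.eval ![a, b] q = 0 := by
  have h0 : toNested q = 0 := by
    refine grid_vanish d (toNested q) x y hx hy ?_ ?_
    · intro k
      rcases toNested_degLe q k with h | h
      · exact Or.inl h
      · exact Or.inr (le_trans h hq)
    · intro i j hij
      rw [toNested_evalEval]
      exact hvan i j hij
  intro a b
  rw [← toNested_evalEval, h0]
  simp

lemma eval_aeval (g : Fin 2 → MvPolynomial (Fin 2) ℝ) (q : MvPolynomial (Fin 2) ℝ)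
    (w : Fin 2 → ℝ) :
    MvPolynomial.eval w (MvPolynomial.aeval g q)
      = MvPolynomial.eval (fun i => MvPolynomial.eval w (g i)) q := by
  rw [MvPolynomial.aeval_def]
  have h := MvPolynomial.eval₂_comp_left (MvPolynomial.eval w)
    (algebraMap ℝ (MvPolynomial (Fin 2) ℝ)) g q
  rw [h]
  have h2 : (MvPolynomial.eval w).comp (algebraMap ℝ (MvPolynomial (Fin 2) ℝ))
      = RingHom.id ℝ := by
    ext r
    simp [MvPolynomial.algebraMap_eq]
  rw [h2]
  rfl

lemma totalDegree_aeval_le (g : Fin 2 → MvPolynomial (Fin 2) ℝ)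
    (hg : ∀ i, (g i).totalDegree ≤ 1) (q : MvPolynomial (Fin 2) ℝ) :
    (MvPolynomial.aeval g q).totalDegree ≤ q.totalDegree := by
  rw [MvPolynomial.aeval_def, MvPolynomial.eval₂_eq]
  refine MvPolynomial.totalDegree_finsetSum_le fun dd hdd => ?_
  refine le_trans (MvPolynomial.totalDegree_mul _ _) ?_
  rw [MvPolynomial.algebraMap_eq, MvPolynomial.totalDegree_C, zero_add]
  refine le_trans (MvPolynomial.totalDegree_finset_prod _ _) ?_
  refine le_trans (Finset.sum_le_sum fun i _ => le_trans (MvPolynomial.totalDegree_pow _ _)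
    (by have := hg i; calc dd i * (g i).totalDegree ≤ dd i * 1 := Nat.mul_le_mul_left _ this
        _ = dd i := mul_one _)) ?_
  have := MvPolynomial.le_totalDegree hdd
  exact this

lemma continuous_mveval (q : MvPolynomial (Fin 2) ℝ) :
    Continuous fun z : ℝ × ℝ => MvPolynomial.eval ![z.1, z.2] q := by
  induction q using MvPolynomial.induction_on with
  | C r => simpa using continuous_const
  | add p q hp hq => simp only [map_add]; exact hp.add hq
  | mul_X p i hp =>
    simp only [map_mul, MvPolynomial.eval_X]
    refine hp.mul ?_
    fin_cases i
    · simpa using continuous_fst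
    · simpa using continuous_snd


lemma totalDegree_linear (α a b : ℝ) :
    (MvPolynomial.C α + MvPolynomial.C a * MvPolynomial.X 0
      + MvPolynomial.C b * MvPolynomial.X 1 : MvPolynomial (Fin 2) ℝ).totalDegree ≤ 1 := by
  refine le_trans (MvPolynomial.totalDegree_add _ _)
    (max_le (le_trans (MvPolynomial.totalDegree_add _ _) (max_le ?_ ?_)) ?_)
  · rw [MvPolynomial.totalDegree_C]; omega
  · refine le_trans (MvPolynomial.totalDegree_mul _ _) ?_
    rw [MvPolynomial.totalDegree_C, MvPolynomial.totalDegree_X]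
  · refine le_trans (MvPolynomial.totalDegree_mul _ _) ?_
    rw [MvPolynomial.totalDegree_C, MvPolynomial.totalDegree_X]

lemma IsPolyDeg.affine_comp {n : ℕ} {f : ℝ × ℝ → ℝ} (h : IsPolyDeg n f)
    (c α a b β γ e : ℝ) :
    IsPolyDeg n (fun z => c * f (α + a * z.1 + b * z.2, β + γ * z.1 + e * z.2)) := by
  obtain ⟨q, hqd, hq⟩ := h
  set g : Fin 2 → MvPolynomial (Fin 2) ℝ :=
    ![MvPolynomial.C α + MvPolynomial.C a * MvPolynomial.X 0
        + MvPolynomial.C b * MvPolynomial.X 1,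
      MvPolynomial.C β + MvPolynomial.C γ * MvPolynomial.X 0
        + MvPolynomial.C e * MvPolynomial.X 1] with hgdef
  have hgdeg : ∀ i, (g i).totalDegree ≤ 1 := by
    intro i
    fin_cases i <;>
      · simp only [hgdef, Matrix.cons_val_zero, Matrix.cons_val_one, Matrix.head_cons]
        exact totalDegree_linear _ _ _
  refine ⟨MvPolynomial.C c * MvPolynomial.aeval g q, ?_, ?_⟩
  · refine le_trans (MvPolynomial.totalDegree_mul _ _) ?_
    rw [MvPolynomial.totalDegree_C, zero_add]
    exact le_trans (totalDegree_aeval_le g hgdeg q) hqd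
  · intro z
    simp only []
    rw [map_mul, MvPolynomial.eval_C, eval_aeval,
      hq (α + a * z.1 + b * z.2, β + γ * z.1 + e * z.2)]
    have harg : (fun i => (MvPolynomial.eval ![z.1, z.2]) (g i))
        = ![(α + a * z.1 + b * z.2, β + γ * z.1 + e * z.2).1,
            (α + a * z.1 + b * z.2, β + γ * z.1 + e * z.2).2] := by
      funext i
      fin_cases i <;> simp [hgdef]
    rw [harg]

lemma interpNodes_mem (m : ℕ) (hm : 2 ≤ m) (T : Fin 3 → ℝ × ℝ) (i j : ℕ)
    (hij : i + j ≤ m - 1) :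
    T 0 + (((i : ℝ)) / ((m : ℝ) - 1)) • (T 1 - T 0)
      + (((j : ℝ)) / ((m : ℝ) - 1)) • (T 2 - T 0) ∈ interpNodes m T := by
  set d : ℕ := m - 1 with hddef
  have hd1 : 1 ≤ d := by omega
  have hmd : (m : ℝ) - 1 = (d : ℝ) := by
    have hm' : m = d + 1 := by omega
    rw [hm']; push_cast; ring
  have hdpos : ((d : ℝ)) ≠ 0 := by
    have : (0:ℝ) < (d:ℝ) := by exact_mod_cast hd1
    linarith
  have hcast : ((d - i - j : ℕ) : ℝ) = (d : ℝ) - (i : ℝ) - (j : ℝ) := by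
    have hsum : (d - i - j) + (i + j) = d := by omega
    have h1 : (((d - i - j) + (i + j) : ℕ) : ℝ) = (d : ℝ) := by rw [hsum]
    push_cast at h1
    linarith
  refine ⟨![d - i - j, i, j], ?_, ?_⟩
  · rw [Fin.sum_univ_three]
    simp only [Matrix.cons_val_zero, Matrix.cons_val_one, Matrix.head_cons,
      Matrix.cons_val_two, Matrix.tail_cons]
    omega
  · rw [Fin.sum_univ_three, hmd]
    simp only [Matrix.cons_val_zero, Matrix.cons_val_one, Matrix.head_cons,
      Matrix.cons_val_two, Matrix.tail_cons]
    refine Prod.ext_iff.mpr ⟨?_, ?_⟩ <;>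
    · simp only [Prod.fst_add, Prod.snd_add, Prod.smul_fst, Prod.smul_snd, Prod.fst_sub,
        Prod.snd_sub, smul_eq_mul, hcast]
      field_simp
      ring

lemma interpolant_unique {m : ℕ} (hm : 2 ≤ m) {T : Fin 3 → ℝ × ℝ} (hT : triArea T ≠ 0)
    {v p₁ p₂ : ℝ × ℝ → ℝ} (h₁ : IsInterpolant m T v p₁) (h₂ : IsInterpolant m T v p₂) :
    p₁ = p₂ := by
  obtain ⟨⟨q₁, hq₁d, hq₁⟩, hn₁⟩ := h₁
  obtain ⟨⟨q₂, hq₂d, hq₂⟩, hn₂⟩ := h₂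
  set d : ℕ := m - 1 with hddef
  have hd1 : 1 ≤ d := by omega
  have hdpos : ((d : ℝ)) ≠ 0 := by
    have : (0:ℝ) < (d:ℝ) := by exact_mod_cast hd1
    linarith
  set q : MvPolynomial (Fin 2) ℝ := q₁ - q₂ with hqdef
  have hqd : q.totalDegree ≤ d :=
    le_trans (MvPolynomial.totalDegree_sub q₁ q₂) (max_le hq₁d hq₂d)
  have hD : ((T 1).1 - (T 0).1) * ((T 2).2 - (T 0).2)
      - ((T 2).1 - (T 0).1) * ((T 1).2 - (T 0).2) ≠ 0 := by
    intro h
    apply hT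
    rw [triArea, h, abs_zero, zero_div]
  set g : Fin 2 → MvPolynomial (Fin 2) ℝ :=
    ![MvPolynomial.C (T 0).1 + MvPolynomial.C ((T 1).1 - (T 0).1) * MvPolynomial.X 0
        + MvPolynomial.C ((T 2).1 - (T 0).1) * MvPolynomial.X 1,
      MvPolynomial.C (T 0).2 + MvPolynomial.C ((T 1).2 - (T 0).2) * MvPolynomial.X 0
        + MvPolynomial.C ((T 2).2 - (T 0).2) * MvPolynomial.X 1] with hgdef
  have hgdeg : ∀ i, (g i).totalDegree ≤ 1 := by
    intro i
    fin_cases i <;>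
      · simp only [hgdef, Matrix.cons_val_zero, Matrix.cons_val_one, Matrix.head_cons]
        exact totalDegree_linear _ _ _
  set F : MvPolynomial (Fin 2) ℝ := MvPolynomial.aeval g q with hFdef
  have hFeval : ∀ s t : ℝ, MvPolynomial.eval ![s, t] F
      = MvPolynomial.eval ![(T 0).1 + s * ((T 1).1 - (T 0).1) + t * ((T 2).1 - (T 0).1),
          (T 0).2 + s * ((T 1).2 - (T 0).2) + t * ((T 2).2 - (T 0).2)] q := by
    intro s t
    rw [hFdef, eval_aeval]
    have harg : (fun i => (MvPolynomial.eval ![s, t]) (g i))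
        = ![(T 0).1 + s * ((T 1).1 - (T 0).1) + t * ((T 2).1 - (T 0).1),
          (T 0).2 + s * ((T 1).2 - (T 0).2) + t * ((T 2).2 - (T 0).2)] := by
      funext i
      fin_cases i <;> simp [hgdef] <;> ring
    rw [harg]
  have hqeval : ∀ z : ℝ × ℝ, MvPolynomial.eval ![z.1, z.2] q = p₁ z - p₂ z := by
    intro z
    rw [hqdef, map_sub, ← hq₁, ← hq₂]
  have hnodes : ∀ i j : ℕ, i + j ≤ d →
      MvPolynomial.eval ![(i:ℝ)/(d:ℝ), (j:ℝ)/(d:ℝ)] F = 0 := by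
    intro i j hij
    rw [hFeval]
    set z : ℝ × ℝ := T 0 + ((i:ℝ)/(d:ℝ)) • (T 1 - T 0) + ((j:ℝ)/(d:ℝ)) • (T 2 - T 0) with hzdef
    have hmd : (m : ℝ) - 1 = (d : ℝ) := by
      have hm2 : m = d + 1 := by omega
      rw [hm2]; push_cast; ring
    have hz : z ∈ interpNodes m T := by
      have := interpNodes_mem m hm T i j (by omega)
      rw [hmd] at this
      exact this
    have hz1 : z.1 = (T 0).1 + (i:ℝ)/(d:ℝ) * ((T 1).1 - (T 0).1)
        + (j:ℝ)/(d:ℝ) * ((T 2).1 - (T 0).1) := by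
      simp only [hzdef, Prod.fst_add, Prod.smul_fst, Prod.fst_sub, smul_eq_mul]
    have hz2 : z.2 = (T 0).2 + (i:ℝ)/(d:ℝ) * ((T 1).2 - (T 0).2)
        + (j:ℝ)/(d:ℝ) * ((T 2).2 - (T 0).2) := by
      simp only [hzdef, Prod.snd_add, Prod.smul_snd, Prod.snd_sub, smul_eq_mul]
    rw [← hz1, ← hz2, hqeval z, hn₁ z hz, hn₂ z hz, sub_self]
  have hall := mv_vanish d F (le_trans (totalDegree_aeval_le g hgdeg q) hqd)
      (fun i => (i:ℝ)/(d:ℝ)) (fun j => (j:ℝ)/(d:ℝ))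
      (fun i j hi hj hne h => hne (by
        field_simp at h
        exact_mod_cast h))
      (fun i j hi hj hne h => hne (by
        field_simp at h
        exact_mod_cast h)) hnodes
  funext z
  set s : ℝ := ((z.1 - (T 0).1) * ((T 2).2 - (T 0).2)
      - ((T 2).1 - (T 0).1) * (z.2 - (T 0).2))
      / (((T 1).1 - (T 0).1) * ((T 2).2 - (T 0).2)
        - ((T 2).1 - (T 0).1) * ((T 1).2 - (T 0).2)) with hsdef
  set t : ℝ := (((T 1).1 - (T 0).1) * (z.2 - (T 0).2)
      - (z.1 - (T 0).1) * ((T 1).2 - (T 0).2))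
      / (((T 1).1 - (T 0).1) * ((T 2).2 - (T 0).2)
        - ((T 2).1 - (T 0).1) * ((T 1).2 - (T 0).2)) with htdef
  have h := hall s t
  rw [hFeval] at h
  have e1 : (T 0).1 + s * ((T 1).1 - (T 0).1) + t * ((T 2).1 - (T 0).1) = z.1 := by
    rw [hsdef, htdef, div_mul_eq_mul_div, div_mul_eq_mul_div, add_assoc, ← add_div,
      add_div' _ _ _ hD, div_eq_iff hD]
    ring
  have e2 : (T 0).2 + s * ((T 1).2 - (T 0).2) + t * ((T 2).2 - (T 0).2) = z.2 := by
    rw [hsdef, htdef, div_mul_eq_mul_div, div_mul_eq_mul_div, add_assoc, ← add_div,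
      add_div' _ _ _ hD, div_eq_iff hD]
    ring
  rw [e1, e2, hqeval] at h
  exact sub_eq_zero.mp h

lemma linearMap_apply_eq (Ψ : (ℝ × ℝ) →ₗ[ℝ] ℝ × ℝ) (z : ℝ × ℝ) :
    Ψ z = ((Ψ (1,0)).1 * z.1 + (Ψ (0,1)).1 * z.2, (Ψ (1,0)).2 * z.1 + (Ψ (0,1)).2 * z.2) := by
  have hz : z = z.1 • ((1:ℝ), (0:ℝ)) + z.2 • ((0:ℝ), (1:ℝ)) := by
    refine Prod.ext_iff.mpr ⟨?_, ?_⟩ <;> simp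
  conv_lhs => rw [hz]
  rw [map_add, _root_.map_smul, _root_.map_smul]
  refine Prod.ext_iff.mpr ⟨?_, ?_⟩ <;>
    simp only [Prod.fst_add, Prod.snd_add, Prod.smul_fst, Prod.smul_snd, smul_eq_mul] <;> ring

lemma interpNodes_map (m : ℕ) (T : Fin 3 → ℝ × ℝ) (Ψ : (ℝ × ℝ) ≃ₗ[ℝ] ℝ × ℝ) {z : ℝ × ℝ}
    (hz : z ∈ interpNodes m T) : Ψ z ∈ interpNodes m (fun i => Ψ (T i)) := by
  obtain ⟨k, hk, rfl⟩ := hz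
  refine ⟨k, hk, ?_⟩
  rw [map_sum]
  exact Finset.sum_congr rfl fun i _ => by rw [_root_.map_smul]

lemma IsInterpolant.comp' (m : ℕ) (T : Fin 3 → ℝ × ℝ) (Ψ : (ℝ × ℝ) ≃ₗ[ℝ] ℝ × ℝ)
    (v pI : ℝ × ℝ → ℝ) (c : ℝ) (h : IsInterpolant m (fun i => Ψ (T i)) v pI) :
    IsInterpolant m T (fun z => c * v (Ψ z)) (fun z => c * pI (Ψ z)) := by
  constructor
  · have h2 := IsPolyDeg.affine_comp h.1 c 0 (Ψ (1,0)).1 (Ψ (0,1)).1 0 (Ψ (1,0)).2 (Ψ (0,1)).2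
    have heq : (fun z : ℝ × ℝ => c * pI (Ψ z))
        = fun z => c * pI (0 + (Ψ (1,0)).1 * z.1 + (Ψ (0,1)).1 * z.2,
            0 + (Ψ (1,0)).2 * z.1 + (Ψ (0,1)).2 * z.2) := by
      funext z
      have happ := linearMap_apply_eq (Ψ : (ℝ × ℝ) →ₗ[ℝ] ℝ × ℝ) z
      simp only [LinearEquiv.coe_coe] at happ
      rw [happ, zero_add, zero_add]
    rw [heq]
    exact h2
  · intro z hz
    simp only []
    rw [h.2 _ (interpNodes_map m T Ψ hz)]

lemma interp_continuous (m : ℕ) (T : Fin 3 → ℝ × ℝ) (v : ℝ × ℝ → ℝ) :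
    Continuous (interp m T v) := by
  unfold interp
  by_cases h : ∃ p, IsInterpolant m T v p
  · rw [dif_pos h]
    obtain ⟨q, hqd, hq⟩ := h.choose_spec.1
    have : h.choose = fun z => MvPolynomial.eval ![z.1, z.2] q := funext hq
    rw [this]
    exact continuous_mveval q
  · rw [dif_neg h]
    exact continuous_const

lemma interp_comp (m : ℕ) (hm : 2 ≤ m) (T : Fin 3 → ℝ × ℝ) (Ψ : (ℝ × ℝ) ≃ₗ[ℝ] ℝ × ℝ)
    (hT' : triArea (fun i => Ψ (T i)) ≠ 0) (v : ℝ × ℝ → ℝ) (c : ℝ) (hc : c ≠ 0) :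
    interp m T (fun z => c * v (Ψ z))
      = fun z => c * interp m (fun i => Ψ (T i)) v (Ψ z) := by
  have transfer1 : ∀ pp, IsInterpolant m T (fun z => c * v (Ψ z)) pp →
      IsInterpolant m (fun i => Ψ (T i)) v (fun z => c⁻¹ * pp (Ψ.symm z)) := by
    intro pp hpp
    have hTT : IsInterpolant m (fun i => Ψ.symm ((fun i => Ψ (T i)) i))
        (fun z => c * v (Ψ z)) pp := by
      have : (fun i => Ψ.symm ((fun i => Ψ (T i)) i)) = T := by
        funext i; simp
      rw [this]
      exact hpp
    have h2 := IsInterpolant.comp' m (fun i => Ψ (T i)) Ψ.symm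
      (fun z => c * v (Ψ z)) pp c⁻¹ hTT
    have hfun : (fun z => c⁻¹ * (c * v (Ψ (Ψ.symm z)))) = v := by
      funext z
      rw [LinearEquiv.apply_symm_apply, ← mul_assoc, inv_mul_cancel₀ hc, one_mul]
    rw [← hfun]
    exact h2
  have hiff : (∃ pp, IsInterpolant m T (fun z => c * v (Ψ z)) pp)
      ↔ (∃ pp, IsInterpolant m (fun i => Ψ (T i)) v pp) := by
    constructor
    · rintro ⟨pp, hpp⟩
      exact ⟨_, transfer1 pp hpp⟩
    · rintro ⟨pp, hpp⟩
      exact ⟨_, IsInterpolant.comp' m T Ψ v pp c hpp⟩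
  unfold interp
  by_cases hE : ∃ pp, IsInterpolant m T (fun z => c * v (Ψ z)) pp
  · rw [dif_pos hE, dif_pos (hiff.mp hE)]
    have hp₁ := hE.choose_spec
    have hp₂ := (hiff.mp hE).choose_spec
    have huniq := interpolant_unique hm hT' (transfer1 _ hp₁) hp₂
    funext z
    have hpt := congrFun huniq (Ψ z)
    simp only [LinearEquiv.symm_apply_apply] at hpt
    rw [← hpt, ← mul_assoc, mul_inv_cancel₀ hc, one_mul]
  · rw [dif_neg hE, dif_neg (fun h => hE (hiff.mpr h))]
    funext z
    simp


lemma det_eq (Ψ : (ℝ × ℝ) →ₗ[ℝ] ℝ × ℝ) :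
    LinearMap.det Ψ = (Ψ (1,0)).1 * (Ψ (0,1)).2 - (Ψ (0,1)).1 * (Ψ (1,0)).2 := by
  rw [← LinearMap.det_toMatrix (Module.Basis.finTwoProd ℝ) Ψ, Matrix.det_fin_two]
  simp [LinearMap.toMatrix_apply, Module.Basis.coe_finTwoProd_repr, Module.Basis.finTwoProd_zero,
    Module.Basis.finTwoProd_one]

lemma triArea_map (Ψ : (ℝ × ℝ) →ₗ[ℝ] ℝ × ℝ) (T : Fin 3 → ℝ × ℝ) :
    triArea (fun i => Ψ (T i)) = |LinearMap.det Ψ| * triArea T := by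
  rw [triArea, triArea]
  rw [linearMap_apply_eq Ψ (T 0), linearMap_apply_eq Ψ (T 1), linearMap_apply_eq Ψ (T 2)]
  simp only []
  rw [det_eq]
  rw [show ((Ψ (1,0)).1 * (T 1).1 + (Ψ (0,1)).1 * (T 1).2
        - ((Ψ (1,0)).1 * (T 0).1 + (Ψ (0,1)).1 * (T 0).2))
      * ((Ψ (1,0)).2 * (T 2).1 + (Ψ (0,1)).2 * (T 2).2
        - ((Ψ (1,0)).2 * (T 0).1 + (Ψ (0,1)).2 * (T 0).2))
      - ((Ψ (1,0)).1 * (T 2).1 + (Ψ (0,1)).1 * (T 2).2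
        - ((Ψ (1,0)).1 * (T 0).1 + (Ψ (0,1)).1 * (T 0).2))
      * ((Ψ (1,0)).2 * (T 1).1 + (Ψ (0,1)).2 * (T 1).2
        - ((Ψ (1,0)).2 * (T 0).1 + (Ψ (0,1)).2 * (T 0).2))
    = ((Ψ (1,0)).1 * (Ψ (0,1)).2 - (Ψ (0,1)).1 * (Ψ (1,0)).2)
      * (((T 1).1 - (T 0).1) * ((T 2).2 - (T 0).2)
        - ((T 2).1 - (T 0).1) * ((T 1).2 - (T 0).2)) from by ring]
  rw [abs_mul, mul_div_assoc]

lemma triangleSet_map (Ψ : (ℝ × ℝ) ≃ₗ[ℝ] ℝ × ℝ) (T : Fin 3 → ℝ × ℝ) :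
    Ψ '' triangleSet T = triangleSet (fun i => Ψ (T i)) := by
  rw [triangleSet, triangleSet]
  have h := (Ψ : (ℝ × ℝ) →ₗ[ℝ] ℝ × ℝ).image_convexHull (Set.range T)
  simp only [LinearEquiv.coe_coe] at h
  rw [h, ← Set.range_comp]
  rfl

lemma triangleSet_measurable (T : Fin 3 → ℝ × ℝ) : MeasurableSet (triangleSet T) :=
  ((Set.finite_range T).isCompact_convexHull ℝ).isClosed.measurableSet

lemma setIntegral_comp_linearEquiv (Ψ : (ℝ × ℝ) ≃ₗ[ℝ] ℝ × ℝ) (s : Set (ℝ × ℝ))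
    (hs : MeasurableSet s) (g : ℝ × ℝ → ℝ) (hg : Continuous g) :
    ∫ z in s, g (Ψ z) = |LinearMap.det (Ψ : (ℝ × ℝ) →ₗ[ℝ] ℝ × ℝ)|⁻¹ * ∫ z in Ψ '' s, g z := by
  have hdet : LinearMap.det (Ψ : (ℝ × ℝ) →ₗ[ℝ] ℝ × ℝ) ≠ 0 := Ψ.isUnit_det'.ne_zero
  have hcont : Continuous Ψ := (Ψ : (ℝ × ℝ) →ₗ[ℝ] ℝ × ℝ).continuous_of_finiteDimensional
  have hconts : Continuous Ψ.symm :=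
    (Ψ.symm : (ℝ × ℝ) →ₗ[ℝ] ℝ × ℝ).continuous_of_finiteDimensional
  have himg : MeasurableSet (Ψ '' s) := by
    rw [LinearEquiv.image_eq_preimage_symm]
    exact hconts.measurable hs
  have hmap : Measure.map Ψ (volume : Measure (ℝ × ℝ))
      = ENNReal.ofReal |(LinearMap.det (Ψ : (ℝ × ℝ) →ₗ[ℝ] ℝ × ℝ))⁻¹| • volume := by
    have := Measure.map_linearMap_addHaar_eq_smul_addHaar
      (volume : Measure (ℝ × ℝ)) hdet
    exact this
  have hind : (fun z => s.indicator (fun z => g (Ψ z)) z)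
      = fun z => (Ψ '' s).indicator g (Ψ z) := by
    funext z
    by_cases hz : z ∈ s
    · rw [Set.indicator_of_mem hz, Set.indicator_of_mem (Set.mem_image_of_mem _ hz)]
    · rw [Set.indicator_of_notMem hz, Set.indicator_of_notMem
        (fun hmem => hz ((Ψ.injective.mem_set_image).mp hmem))]
  calc ∫ z in s, g (Ψ z) = ∫ z, s.indicator (fun z => g (Ψ z)) z := (integral_indicator hs).symm
    _ = ∫ z, (Ψ '' s).indicator g (Ψ z) := by rw [hind]
    _ = ∫ w, (Ψ '' s).indicator g w ∂(Measure.map Ψ volume) :=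
        (integral_map hcont.measurable.aemeasurable
          (hg.measurable.indicator himg).aestronglyMeasurable).symm
    _ = |LinearMap.det (Ψ : (ℝ × ℝ) →ₗ[ℝ] ℝ × ℝ)|⁻¹ * ∫ w, (Ψ '' s).indicator g w := by
        rw [hmap, integral_smul_measure, ENNReal.toReal_ofReal (abs_nonneg _), abs_inv,
          smul_eq_mul]
    _ = |LinearMap.det (Ψ : (ℝ × ℝ) →ₗ[ℝ] ℝ × ℝ)|⁻¹ * ∫ z in Ψ '' s, g z := by
        rw [integral_indicator himg]

lemma form_homog {m : ℕ} {π : ℝ × ℝ → ℝ} (hπ : IsForm m π) (t : ℝ) (z : ℝ × ℝ) :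
    π (t • z) = t ^ m * π z := by
  obtain ⟨a, ha⟩ := hπ
  rw [ha, ha, formEval, formEval, Finset.mul_sum]
  refine Finset.sum_congr rfl fun i _ => ?_
  have hi : (i : ℕ) ≤ m := Fin.is_le i
  have hsm1 : (t • z).1 = t * z.1 := rfl
  have hsm2 : (t • z).2 = t * z.2 := rfl
  rw [hsm1, hsm2, mul_pow, mul_pow]
  have ht : t ^ (i : ℕ) * t ^ (m - (i : ℕ)) = t ^ m := by
    rw [← pow_add]; congr 1; omega
  linear_combination (a i * z.1 ^ (i : ℕ) * z.2 ^ (m - (i : ℕ))) * ht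

lemma form_continuous {m : ℕ} {π : ℝ × ℝ → ℝ} (hπ : IsForm m π) : Continuous π := by
  obtain ⟨a, ha⟩ := hπ
  have : π = fun z => formEval m a z := funext ha
  rw [this]
  unfold formEval
  refine continuous_finset_sum _ fun i _ => ?_
  exact (continuous_const.mul (continuous_fst.pow _)).mul (continuous_snd.pow _)


lemma lpErr_comp (m : ℕ) (hm : 2 ≤ m) (p : ℝ) (hp : 1 ≤ p) (T : Fin 3 → ℝ × ℝ)
    (Ψ : (ℝ × ℝ) ≃ₗ[ℝ] ℝ × ℝ) (hdet : |LinearMap.det (Ψ : (ℝ × ℝ) →ₗ[ℝ] ℝ × ℝ)| = 1)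
    (hT' : triArea (fun i => Ψ (T i)) ≠ 0) (v : ℝ × ℝ → ℝ) (hv : Continuous v)
    (c : ℝ) (hc : 0 < c) :
    lpErr m p T (fun z => c * v (Ψ z)) = c * lpErr m p (fun i => Ψ (T i)) v := by
  have hp0 : p ≠ 0 := by linarith
  set T' : Fin 3 → ℝ × ℝ := fun i => Ψ (T i) with hT'def
  set g : ℝ × ℝ → ℝ := fun w => |v w - interp m T' v w| ^ p with hgdef
  have hgcont : Continuous g := by
    refine Continuous.rpow_const ?_ fun w => Or.inr (by linarith)
    exact (hv.sub (interp_continuous m T' v)).abs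
  have hgnonneg : ∀ w, 0 ≤ g w := fun w => Real.rpow_nonneg (abs_nonneg _) _
  rw [lpErr, interp_comp m hm T Ψ hT' v c hc.ne']
  have hfun : (fun z => |(fun z => c * v (Ψ z)) z
        - (fun z => c * interp m T' v (Ψ z)) z| ^ p)
      = fun z => c ^ p * g (Ψ z) := by
    funext z
    simp only [hgdef]
    rw [← mul_sub, abs_mul, abs_of_pos hc, Real.mul_rpow hc.le (abs_nonneg _)]
  have hstep : (∫ z in triangleSet T, |(fun z => c * v (Ψ z)) z
        - (fun z => c * interp m T' v (Ψ z)) z| ^ p)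
      = c ^ p * ∫ z in triangleSet T, g (Ψ z) := by
    rw [hfun, integral_const_mul]
  rw [hstep, setIntegral_comp_linearEquiv Ψ _ (triangleSet_measurable T) g hgcont,
    hdet, inv_one, one_mul, triangleSet_map]
  have hint_nonneg : 0 ≤ ∫ z in triangleSet T', g z :=
    integral_nonneg fun z => hgnonneg z
  rw [Real.mul_rpow (Real.rpow_nonneg hc.le p) hint_nonneg]
  rw [← Real.rpow_mul hc.le, mul_one_div, div_self hp0, Real.rpow_one, lpErr]


end Stmt12Aux

open Stmt12Aux Pointwise in
/-- the shape function K_{m,p}(π) = inf_{|T|=1} ‖π − I_Tπ‖_{L^p(T)} satisfies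
K_{m,p}(π∘φ) = |det φ|^{m/2} K_{m,p}(π) for every invertible linear map φ. -/
theorem stmt12 (m : ℕ) (hm : 2 ≤ m) (p : ℝ) (hp : 1 ≤ p)
    (π : ℝ × ℝ → ℝ) (hπ : IsForm m π) (φ : (ℝ × ℝ) ≃ₗ[ℝ] (ℝ × ℝ)) :
    Kfun m p (fun z => π (φ z)) =
      |LinearMap.det (φ : (ℝ × ℝ) →ₗ[ℝ] (ℝ × ℝ))| ^ ((m : ℝ) / 2) * Kfun m p π := by
  classical
  set Φ : (ℝ × ℝ) →ₗ[ℝ] ℝ × ℝ := (φ : (ℝ × ℝ) →ₗ[ℝ] ℝ × ℝ) with hΦ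
  have hdet0 : LinearMap.det Φ ≠ 0 := φ.isUnit_det'.ne_zero
  set D : ℝ := |LinearMap.det Φ| with hD
  have hDpos : 0 < D := abs_pos.mpr hdet0
  set r : ℝ := D ^ ((1:ℝ)/2) with hr
  have hrpos : 0 < r := Real.rpow_pos_of_pos hDpos _
  set ψ : (ℝ × ℝ) ≃ₗ[ℝ] ℝ × ℝ :=
    φ.trans (LinearEquiv.smulOfNeZero ℝ (ℝ × ℝ) r⁻¹ (inv_ne_zero hrpos.ne')) with hψ
  have hψ_apply : ∀ z, ψ z = r⁻¹ • (φ z) := by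
    intro z
    rw [hψ, LinearEquiv.trans_apply, LinearEquiv.smulOfNeZero_apply]
  have hr2 : r ^ (2:ℕ) = D := by
    rw [hr, ← Real.rpow_natCast (D ^ ((1:ℝ)/2)) 2, ← Real.rpow_mul hDpos.le]
    norm_num
  have hcoe : (ψ : (ℝ × ℝ) →ₗ[ℝ] ℝ × ℝ) = r⁻¹ • Φ := by
    refine LinearMap.ext fun z => ?_
    have h1 : (ψ : (ℝ × ℝ) →ₗ[ℝ] ℝ × ℝ) z = ψ z := rfl
    rw [h1, hψ_apply z, LinearMap.smul_apply]
    rfl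
  have hdetψ : LinearMap.det (ψ : (ℝ × ℝ) →ₗ[ℝ] ℝ × ℝ) = r⁻¹ ^ 2 * LinearMap.det Φ := by
    rw [hcoe, LinearMap.det_smul]
    congr 2
    simp
  have habsψ : |LinearMap.det (ψ : (ℝ × ℝ) →ₗ[ℝ] ℝ × ℝ)| = 1 := by
    rw [hdetψ, abs_mul, ← hD, abs_of_nonneg (by positivity : (0:ℝ) ≤ r⁻¹ ^ 2), inv_pow, hr2]
    exact inv_mul_cancel₀ hDpos.ne'
  set c : ℝ := D ^ ((m:ℝ)/2) with hc
  have hcpos : 0 < c := Real.rpow_pos_of_pos hDpos _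
  have hrm : r ^ m = c := by
    rw [hr, hc, ← Real.rpow_natCast (D ^ ((1:ℝ)/2)) m, ← Real.rpow_mul hDpos.le]
    congr 1
    ring
  have hπφ : (fun z => π (φ z)) = fun z => c * π (ψ z) := by
    funext z
    have h1 : φ z = r • (ψ z) := by
      rw [hψ_apply, smul_smul, mul_inv_cancel₀ hrpos.ne', one_smul]
    rw [h1, form_homog hπ r (ψ z), hrm]
  have hdetsymm : |LinearMap.det (ψ.symm : (ℝ × ℝ) →ₗ[ℝ] ℝ × ℝ)| = 1 := by
    rw [LinearEquiv.det_coe_symm, abs_inv, habsψ, inv_one]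
  have hAreaψ : ∀ S : Fin 3 → ℝ × ℝ, triArea (fun i => ψ (S i)) = triArea S := by
    intro S
    have h2 := triArea_map (ψ : (ℝ × ℝ) →ₗ[ℝ] ℝ × ℝ) S
    simp only [LinearEquiv.coe_coe] at h2
    rw [h2, habsψ, one_mul]
  have hAreasymm : ∀ S : Fin 3 → ℝ × ℝ, triArea (fun i => ψ.symm (S i)) = triArea S := by
    intro S
    have h2 := triArea_map (ψ.symm : (ℝ × ℝ) →ₗ[ℝ] ℝ × ℝ) S
    simp only [LinearEquiv.coe_coe] at h2
    rw [h2, hdetsymm, one_mul]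
  have main : ∀ S : Fin 3 → ℝ × ℝ, triArea S = 1 →
      lpErr m p S (fun z => π (φ z)) = c * lpErr m p (fun i => ψ (S i)) π := by
    intro S hS
    rw [hπφ]
    exact lpErr_comp m hm p hp S ψ habsψ (by rw [hAreaψ S, hS]; exact one_ne_zero)
      π (form_continuous hπ) c hcpos
  rw [Kfun, Kfun]
  have hset : { e | ∃ T : Fin 3 → ℝ × ℝ, triArea T = 1 ∧ e = lpErr m p T (fun z => π (φ z)) }
      = c • { e | ∃ T : Fin 3 → ℝ × ℝ, triArea T = 1 ∧ e = lpErr m p T π } := by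
    ext ee
    simp only [Set.mem_smul_set, Set.mem_setOf_eq]
    constructor
    · rintro ⟨S, hS, rfl⟩
      exact ⟨lpErr m p (fun i => ψ (S i)) π,
        ⟨fun i => ψ (S i), by rw [hAreaψ S]; exact hS, rfl⟩,
        by rw [smul_eq_mul, ← main S hS]⟩
    · rintro ⟨ee', ⟨S', hS', rfl⟩, rfl⟩
      have harea : triArea (fun i => ψ.symm (S' i)) = 1 := by rw [hAreasymm S']; exact hS'
      refine ⟨fun i => ψ.symm (S' i), harea, ?_⟩
      have h3 := main (fun i => ψ.symm (S' i)) harea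
      have hback : (fun i => ψ ((fun i => ψ.symm (S' i)) i)) = S' := by
        funext i
        simp
      rw [hback] at h3
      rw [smul_eq_mul, ← h3]
  rw [hset, Real.sInf_smul_of_nonneg hcpos.le, smul_eq_mul]


end
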